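/- Let 0 < c < 1 and 0 < S < M. Under the Simple-LSH transformation with normalization factor M, the (S, c)-MIPS problem becomes a (d, c̃)-Euclidean near-neighbor problem on the unit sphere with distance threshold d = √(2 - 2S/M) and approximation factor c̃ = √((M - cS)/(M - S)); i.e., ⟨q, x⟩ = S gives ‖P(q) - P(x/M)‖ = √(2 - 2S/M) and ⟨q, x⟩ = cS gives ‖P(q) - P(x/M)‖ = c̃·√(2 - 2S/M). -/

import Mathlib

open Real RealInnerProductSpace

noncomputable def simpleLSH {d : ℕ} (y : EuclideanSpace ℝ (Fin d)) :
    EuclideanSpace ℝ (Fin (d + 1)) :=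
  (EuclideanSpace.equiv (Fin (d + 1)) ℝ).symm
    (Fin.snoc (EuclideanSpace.equiv (Fin d) ℝ y) (Real.sqrt (1 - ‖y‖ ^ 2)))

lemma key {d : ℕ} (q y : EuclideanSpace ℝ (Fin d)) (hq : ‖q‖ = 1) (hy : ‖y‖ ≤ 1) :
    ‖simpleLSH q - simpleLSH y‖ = Real.sqrt (2 - 2 * ⟪q, y⟫) := by
  have hnorm : ∀ v : EuclideanSpace ℝ (Fin d), ‖v‖ ^ 2 = ∑ i, v i ^ 2 := by
    intro v
    rw [EuclideanSpace.norm_eq, Real.sq_sqrt (by positivity)]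
    simp [sq_abs]
  have hq0 : Real.sqrt (1 - ‖q‖ ^ 2) = 0 := by rw [hq]; simp
  have hy2 : ‖y‖ ^ 2 ≤ 1 := by nlinarith [norm_nonneg y]
  rw [EuclideanSpace.norm_eq]
  congr 1
  rw [Fin.sum_univ_castSucc]
  have hcoord : ∀ i : Fin d, (simpleLSH q - simpleLSH y) i.castSucc = q i - y i := by
    intro i
    simp [simpleLSH, EuclideanSpace.equiv, Fin.snoc_castSucc]
  have hlast : (simpleLSH q - simpleLSH y) (Fin.last d) =
      Real.sqrt (1 - ‖q‖ ^ 2) - Real.sqrt (1 - ‖y‖ ^ 2) := by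
    simp [simpleLSH, EuclideanSpace.equiv, Fin.snoc_last]
  have hinner : ⟪q, y⟫ = ∑ i, q i * y i := by
    simp [PiLp.inner_apply, RCLike.inner_apply, mul_comm]
  simp only [hcoord, hlast, hq0, zero_sub, Real.norm_eq_abs, sq_abs]
  rw [neg_pow, Real.sq_sqrt (by linarith)]
  have expand : ∑ i, (q i - y i) ^ 2 = (∑ i, q i ^ 2) - 2 * (∑ i, q i * y i) + ∑ i, y i ^ 2 := by
    simp only [sub_sq]
    rw [Finset.sum_add_distrib, Finset.sum_sub_distrib]
    simp only [mul_assoc]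
    rw [← Finset.mul_sum]
  rw [expand, ← hnorm, ← hnorm, ← hinner, hq]
  ring

theorem simpleLSH_to_euclidean_nn (d : ℕ) (c S M : ℝ) (q x : EuclideanSpace ℝ (Fin d))
    (hc0 : 0 < c) (hc1 : c < 1) (hS : 0 < S) (hSM : S < M)
    (hq : ‖q‖ = 1) (hx : ‖x‖ ≤ M) :
    (⟪q, x⟫ = S → ‖simpleLSH q - simpleLSH ((1 / M) • x)‖ = Real.sqrt (2 - 2 * S / M)) ∧
    (⟪q, x⟫ = c * S → ‖simpleLSH q - simpleLSH ((1 / M) • x)‖ =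
      Real.sqrt ((M - c * S) / (M - S)) * Real.sqrt (2 - 2 * S / M)) := by
  have hM : 0 < M := hS.trans hSM
  have hy : ‖(1 / M) • x‖ ≤ 1 := by
    rw [norm_smul, Real.norm_eq_abs, abs_of_pos (by positivity)]
    rw [div_mul_eq_mul_div, one_mul, div_le_one hM]; exact hx
  have hkey := key q ((1 / M) • x) hq hy
  have hin : ⟪q, (1 / M : ℝ) • x⟫ = ⟪q, x⟫ / M := by
    rw [inner_smul_right]; ring
  constructor
  · intro h
    rw [hkey, hin, h]; ring_nf
  · intro h
    rw [hkey, hin, h]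
    have hnn : (0:ℝ) ≤ (M - c * S) / (M - S) := by
      apply div_nonneg <;> nlinarith
    rw [← Real.sqrt_mul hnn]
    congr 1
    have h1 : M - S ≠ 0 := by linarith
    have h2 : M ≠ 0 := ne_of_gt hM
    field_simp
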